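/- Let β, η > 0 and define σ(ξ, ξ₁) = iβ(|ξ−ξ₁|(ξ−ξ₁) − |ξ|ξ + |ξ₁|ξ₁) − η((ξ−ξ₁)² − |ξ−ξ₁| − ξ² + |ξ| + ξ₁² − |ξ₁|). Fix 0 < ε ≪ 1, set γ = εN and I_N = [N, N+2γ]. Then for all N sufficiently large, for all ξ ∈ [N+3γ, N+4γ] and all (ξ₁, ξ₂) with ξ₁ ∈ I_N, ξ₂ − ξ₁ ∈ I_N, ξ − ξ₂ ∈ −I_N, one has |σ(ξ₂, ξ₁)| ∼ (β + η) N², i.e. c(β+η)N² ≤ |σ(ξ₂,ξ₁)| ≤ C(β+η)N² for absolute constants 0 < c ≤ C (depending on ε). -/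

import Mathlib

/-- The resonance function of the Chen-Lee equation. -/
noncomputable def sigmaCL (β η ξ ξ₁ : ℝ) : ℂ :=
  Complex.I * (β : ℂ) * (((|ξ - ξ₁| * (ξ - ξ₁) - |ξ| * ξ + |ξ₁| * ξ₁ : ℝ)) : ℂ) -
    (((η * ((ξ - ξ₁) ^ 2 - |ξ - ξ₁| - ξ ^ 2 + |ξ| + ξ₁ ^ 2 - |ξ₁|) : ℝ)) : ℂ)

/-- On the frequency region K_ξ¹ one has |σ(ξ₂, ξ₁)| ∼ (β + η) N². -/
theorem stmt12 (β η : ℝ) (hβ : 0 < β) (hη : 0 < η) :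
    ∃ ε₀ : ℝ, 0 < ε₀ ∧ ∀ ε : ℝ, 0 < ε → ε < ε₀ →
      ∃ c C : ℝ, 0 < c ∧ c ≤ C ∧ ∃ N₀ : ℝ, ∀ N ≥ N₀,
        ∀ ξ ∈ Set.Icc (N + 3 * (ε * N)) (N + 4 * (ε * N)),
        ∀ ξ₁ ξ₂ : ℝ, ξ₁ ∈ Set.Icc N (N + 2 * (ε * N)) →
          ξ₂ - ξ₁ ∈ Set.Icc N (N + 2 * (ε * N)) →
          ξ₂ - ξ ∈ Set.Icc N (N + 2 * (ε * N)) →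
          c * (β + η) * N ^ 2 ≤ ‖sigmaCL β η ξ₂ ξ₁‖ ∧
            ‖sigmaCL β η ξ₂ ξ₁‖ ≤ C * (β + η) * N ^ 2 := by
  refine ⟨1, one_pos, fun ε hε hε1 => ⟨1, 18, one_pos, by norm_num, 1, fun N hN ξ hξ ξ₁ ξ₂ h1 h2 h3 => ?_⟩⟩
  obtain ⟨h1l, h1u⟩ := h1
  obtain ⟨h2l, h2u⟩ := h2
  have hN0 : (0:ℝ) < N := lt_of_lt_of_le one_pos hN
  have ha : 0 < ξ₁ := lt_of_lt_of_le hN0 h1l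
  have hb : 0 < ξ₂ - ξ₁ := lt_of_lt_of_le hN0 h2l
  have hc : 0 < ξ₂ := by linarith
  have key : sigmaCL β η ξ₂ ξ₁ = ((2 * ξ₁ * (ξ₂ - ξ₁) : ℝ) : ℂ) * ((η : ℂ) - Complex.I * β) := by
    unfold sigmaCL
    rw [abs_of_pos ha, abs_of_pos hb, abs_of_pos hc]
    push_cast
    ring
  have hnorm2 : ‖((η : ℂ) - Complex.I * β)‖ = Real.sqrt (η ^ 2 + β ^ 2) := by
    rw [Complex.norm_def, Complex.normSq_apply]
    norm_num [Complex.sub_re, Complex.sub_im, Complex.mul_re, Complex.mul_im]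
    ring_nf
  have hA : |2 * ξ₁ * (ξ₂ - ξ₁)| = 2 * ξ₁ * (ξ₂ - ξ₁) := by
    exact abs_of_pos (by positivity)
  have hnorm : ‖sigmaCL β η ξ₂ ξ₁‖ = 2 * ξ₁ * (ξ₂ - ξ₁) * Real.sqrt (η ^ 2 + β ^ 2) := by
    rw [key, norm_mul, Complex.norm_real, Real.norm_eq_abs, hA, hnorm2]
  -- sqrt bounds
  have hs1 : (β + η) / 2 ≤ Real.sqrt (η ^ 2 + β ^ 2) := by
    rw [show (β + η) / 2 = Real.sqrt (((β + η) / 2) ^ 2) from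
      (Real.sqrt_sq (by positivity)).symm]
    exact Real.sqrt_le_sqrt (by nlinarith [sq_nonneg (β - η)])
  have hs2 : Real.sqrt (η ^ 2 + β ^ 2) ≤ β + η := by
    rw [show β + η = Real.sqrt ((β + η) ^ 2) from (Real.sqrt_sq (by positivity)).symm]
    exact Real.sqrt_le_sqrt (by nlinarith)
  have hεN : ε * N ≤ N := by nlinarith
  have hAl : 2 * N ^ 2 ≤ 2 * ξ₁ * (ξ₂ - ξ₁) := by nlinarith
  have hAu : 2 * ξ₁ * (ξ₂ - ξ₁) ≤ 18 * N ^ 2 := by nlinarith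
  have hsnn : 0 ≤ Real.sqrt (η ^ 2 + β ^ 2) := Real.sqrt_nonneg _
  constructor
  · rw [hnorm]; nlinarith [mul_le_mul_of_nonneg_left hs1 (le_of_lt (show (0:ℝ) < 2 * N ^ 2 by positivity))]
  · rw [hnorm]
    calc 2 * ξ₁ * (ξ₂ - ξ₁) * Real.sqrt (η ^ 2 + β ^ 2)
        ≤ 18 * N ^ 2 * (β + η) := by nlinarith
      _ = 18 * (β + η) * N ^ 2 := by ring
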